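/- Consider the binary regression model f_θ(y|x) = H(α+βx)^y (1−H(α+βx))^{1−y} for y ∈ {0,1}, where θ = (α, β) ∈ ℝ² and H is either the logistic cdf H(a) = 1/(1+e^{−a}) or the probit cdf H(a) = Φ(a) (Φ the standard normal cdf), with μ the counting measure on {0,1}. Fix x₁ ∈ ℝ, d > 0, and θ₀ = (α₀, β₀) with β₀ > 0. Then for any sequence (X_i) of random variables taking values in the lattice x₁ + dℤ (in particular, for the Bruceton design), the family is S-DQM at θ₀: for every h ∈ ℝ², ∑_{i=1}^n E[D_{θ₀,h/√n}(X_i)] → 0 as n → ∞. -/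

import Mathlib

open Filter MeasureTheory

/-- The logistic sigmoid `σ(a) = 1/(1+e^{−a})`. -/
noncomputable def logisticSigmoid (a : ℝ) : ℝ := 1 / (1 + Real.exp (-a))

/-- The standard normal cumulative distribution function. -/
noncomputable def stdNormalCDF (a : ℝ) : ℝ :=
  ∫ t in Set.Iic a, (Real.sqrt (2 * Real.pi))⁻¹ * Real.exp (-(t ^ 2) / 2)

/-- The binary regression model `f_θ(y|x) = H(α+βx)^y (1−H(α+βx))^{1−y}`, `y ∈ {0,1}`,
with parameter `θ = (α, β)`. -/
noncomputable def binModel (H : ℝ → ℝ) (θ : ℝ × ℝ) (x : ℝ) (y : Bool) : ℝ :=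
  if y then H (θ.1 + θ.2 * x) else 1 - H (θ.1 + θ.2 * x)

/-- `D_{θ,h}(x)` for the binary regression model (counting measure on `{0,1}`):
`∑_{y∈{0,1}} (√f_{θ+h}(y|x) − √f_θ(y|x) − (1/2) h^T u_θ(y|x) √f_θ(y|x))²`, where
`h^T u_θ(y|x)` is the directional derivative of `θ ↦ log f_θ(y|x)` in direction `h`. -/
noncomputable def DbinQM (H : ℝ → ℝ) (θ h : ℝ × ℝ) (x : ℝ) : ℝ :=
  ∑ y : Bool, (Real.sqrt (binModel H (θ + h) x y) - Real.sqrt (binModel H θ x y) -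
    (1 / 2) * (fderiv ℝ (fun t => Real.log (binModel H t x y)) θ h) *
      Real.sqrt (binModel H θ x y)) ^ 2


lemma hexp1 (z : ℝ) : (1+z^2)^2 ≤ 64 * Real.exp (z^2/4) := by
  have h1 : z^2/8 + 1 ≤ Real.exp (z^2/8) := Real.add_one_le_exp _
  have h2 : Real.exp (z^2/4) = (Real.exp (z^2/8))^2 := by
    rw [← Real.exp_nat_mul]; push_cast; ring_nf
  nlinarith [sq_nonneg z, sq_nonneg (z^2), Real.exp_pos (z^2/8), sq_nonneg (z^2/8 + 1)]

lemma hexp2 (b : ℝ) (hb : 0 ≤ b) : (1+b^2)*(1+b) ≤ 576 * Real.exp ((b-1)^2/4) := by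
  have h1 := hexp1 (b-1)
  have h2 : 1+b^2 ≤ 3*(1+(b-1)^2) := by nlinarith [sq_nonneg (b-1)]
  have h3 : 1+b ≤ 3*(1+(b-1)^2) := by nlinarith [sq_nonneg (b-1), sq_nonneg b]
  have h4 : (0:ℝ) < 1+(b-1)^2 := by positivity
  nlinarith [Real.exp_pos ((b-1)^2/4), sq_nonneg (1+(b-1)^2)]

lemma hexp3 (b : ℝ) (hb : 0 ≤ b) : 1+b^2 ≤ 1216 * Real.exp ((b-3)^2/4) := by
  have h1 := hexp1 (b-3)
  have h2 : 1+b^2 ≤ 19*(1+(b-3)^2) := by nlinarith [sq_nonneg (b-3)]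
  have h4 : (0:ℝ) < 1+(b-3)^2 := by positivity
  nlinarith [Real.exp_pos ((b-3)^2/4), sq_nonneg (1+(b-3)^2)]

lemma hexp4 (b : ℝ) (hb : 0 ≤ b) : 1+b^2 ≤ 16 * Real.exp (b/2) := by
  have h1 : b/4 + 1 ≤ Real.exp (b/4) := Real.add_one_le_exp _
  have h2 : Real.exp (b/2) = (Real.exp (b/4))^2 := by
    rw [← Real.exp_nat_mul]; push_cast; ring_nf
  nlinarith [Real.exp_pos (b/4)]



noncomputable def gone (q q' : ℝ → ℝ) (t : ℝ) : ℝ := q' t / (2 * Real.sqrt (q t))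
noncomputable def gtwo (q q' q'' : ℝ → ℝ) (t : ℝ) : ℝ :=
  q'' t / (2 * Real.sqrt (q t)) - (q' t)^2 / (4 * q t * Real.sqrt (q t))

lemma hasDerivAt_sqrt_comp (q q' : ℝ → ℝ) (hq : ∀ a, 0 < q a)
    (hd1 : ∀ a, HasDerivAt q (q' a) a) (t : ℝ) :
    HasDerivAt (fun u => Real.sqrt (q u)) (gone q q' t) t := by
  have h := (Real.hasDerivAt_sqrt (ne_of_gt (hq t))).comp t (hd1 t)
  refine h.congr_deriv ?_
  unfold gone; field_simp

lemma hasDerivAt_gone (q q' q'' : ℝ → ℝ) (hq : ∀ a, 0 < q a)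
    (hd1 : ∀ a, HasDerivAt q (q' a) a) (hd2 : ∀ a, HasDerivAt q' (q'' a) a) (t : ℝ) :
    HasDerivAt (gone q q') (gtwo q q' q'' t) t := by
  have hsqpos : 0 < Real.sqrt (q t) := Real.sqrt_pos.2 (hq t)
  have hden : (2 : ℝ) * Real.sqrt (q t) ≠ 0 := by positivity
  have h := (hd2 t).div ((hasDerivAt_sqrt_comp q q' hq hd1 t).const_mul 2) hden
  refine h.congr_deriv ?_
  have hs2 : Real.sqrt (q t) ^ 2 = q t := Real.sq_sqrt (hq t).le
  unfold gtwo gone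
  set S := Real.sqrt (q t) with hS
  have hq2 : q t = S^2 := hs2.symm
  rw [hq2]
  have hS0 : S ≠ 0 := ne_of_gt hsqpos
  field_simp
  ring



lemma sqrt_taylor (q q' q'' : ℝ → ℝ) (hq : ∀ a, 0 < q a)
    (hd1 : ∀ a, HasDerivAt q (q' a) a) (hd2 : ∀ a, HasDerivAt q' (q'' a) a)
    (a s Q : ℝ)
    (hQ : ∀ r ∈ Set.Icc (0:ℝ) 1, s^2 * |gtwo q q' q'' (a + r*s)| ≤ Q) :
    |Real.sqrt (q (a+s)) - Real.sqrt (q a) - gone q q' a * s| ≤ Q := by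
  have hQ0 : 0 ≤ Q := le_trans (by positivity) (hQ 0 ⟨le_refl 0, zero_le_one⟩)
  have hlin : ∀ r : ℝ, HasDerivAt (fun u : ℝ => a + u*s) s r := by
    intro r
    simpa using (hasDerivAt_id r).mul_const s |>.const_add a
  -- J r = g1(a+rs) * s
  set J : ℝ → ℝ := fun r => gone q q' (a + r*s) * s with hJdef
  have hJ : ∀ r : ℝ, HasDerivAt J (gtwo q q' q'' (a + r*s) * s * s) r := by
    intro r
    exact ((hasDerivAt_gone q q' q'' hq hd1 hd2 (a + r*s)).comp r (hlin r)).mul_const s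
  have step1 : ∀ r ∈ Set.Icc (0:ℝ) 1, |J r - J 0| ≤ Q := by
    intro r hr
    have := Convex.norm_image_sub_le_of_norm_hasDerivWithin_le
      (f := J) (f' := fun r => gtwo q q' q'' (a + r*s) * s * s) (s := Set.Icc (0:ℝ) 1) (C := Q)
      (fun u hu => (hJ u).hasDerivWithinAt)
      (fun u hu => by
        have := hQ u hu
        calc ‖gtwo q q' q'' (a + u*s) * s * s‖ = s^2 * |gtwo q q' q'' (a + u*s)| := by
              rw [Real.norm_eq_abs, abs_mul, abs_mul, ← sq_abs s]; ring
          _ ≤ Q := this)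
      (convex_Icc 0 1) ⟨le_refl 0, zero_le_one⟩ hr
    calc |J r - J 0| = ‖J r - J 0‖ := rfl
      _ ≤ Q * ‖r - 0‖ := this
      _ ≤ Q * 1 := by
          apply mul_le_mul_of_nonneg_left _ hQ0
          rw [sub_zero, Real.norm_eq_abs, abs_of_nonneg hr.1]; exact hr.2
      _ = Q := mul_one Q
  -- F r = sqrt(q(a+rs)) - r * (g1 a * s)
  set F : ℝ → ℝ := fun r => Real.sqrt (q (a + r*s)) - r * (gone q q' a * s) with hFdef
  have hF : ∀ r : ℝ, HasDerivAt F (J r - J 0) r := by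
    intro r
    have h1 : HasDerivAt (fun u : ℝ => Real.sqrt (q (a + u*s))) (gone q q' (a + r*s) * s) r :=
      by have := (hasDerivAt_sqrt_comp q q' hq hd1 (a + r*s)).comp r (hlin r); exact this
    have h2 : HasDerivAt (fun u : ℝ => u * (gone q q' a * s)) (gone q q' a * s) r := by
      simpa using (hasDerivAt_id r).mul_const (gone q q' a * s)
    have := h1.sub h2
    refine this.congr_deriv ?_
    simp [hJdef]
  have step2 := Convex.norm_image_sub_le_of_norm_hasDerivWithin_le
    (f := F) (f' := fun r => J r - J 0) (s := Set.Icc (0:ℝ) 1) (C := Q)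
    (fun u hu => (hF u).hasDerivWithinAt)
    (fun u hu => by rw [Real.norm_eq_abs]; exact step1 u hu)
    (convex_Icc 0 1) (⟨le_refl 0, zero_le_one⟩ : (0:ℝ) ∈ Set.Icc (0:ℝ) 1)
    (⟨zero_le_one, le_refl 1⟩ : (1:ℝ) ∈ Set.Icc (0:ℝ) 1)
  have : ‖F 1 - F 0‖ ≤ Q * ‖(1:ℝ) - 0‖ := step2
  simp only [hFdef] at this
  norm_num at this
  calc |Real.sqrt (q (a+s)) - Real.sqrt (q a) - gone q q' a * s|
      = ‖(Real.sqrt (q (a + 1*s)) - 1 * (gone q q' a * s)) - Real.sqrt (q (a + 0*s))‖ := by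
        rw [Real.norm_eq_abs]; norm_num; ring_nf
    _ ≤ Q := by norm_num at *; convert this using 2 <;> ring_nf



lemma fderiv_log_binModel (H H' : ℝ → ℝ) (hd1 : ∀ a, HasDerivAt H (H' a) a)
    (θ₀ : ℝ × ℝ) (x : ℝ) (y : Bool) (hpos : 0 < binModel H θ₀ x y) (v : ℝ × ℝ) :
    fderiv ℝ (fun t => Real.log (binModel H t x y)) θ₀ v
      = (if y then H' (θ₀.1 + θ₀.2 * x) else -H' (θ₀.1 + θ₀.2 * x)) / binModel H θ₀ x y
        * (v.1 + v.2 * x) := by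
  have hl : HasFDerivAt (fun t : ℝ × ℝ => t.1 + t.2 * x)
      ((ContinuousLinearMap.fst ℝ ℝ ℝ) + x • (ContinuousLinearMap.snd ℝ ℝ ℝ)) θ₀ := by
    have h := (hasFDerivAt_fst (𝕜 := ℝ) (p := θ₀) (E := ℝ) (F := ℝ)).add
      ((hasFDerivAt_snd (𝕜 := ℝ) (p := θ₀) (E := ℝ) (F := ℝ)).mul_const x)
    exact h
  set a := θ₀.1 + θ₀.2 * x with ha
  cases y with
  | true =>
      simp only [binModel, if_true] at hpos ⊢
      have h1 : HasFDerivAt (fun t : ℝ × ℝ => H (t.1 + t.2 * x))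
          ((H' a) • ((ContinuousLinearMap.fst ℝ ℝ ℝ) + x • (ContinuousLinearMap.snd ℝ ℝ ℝ))) θ₀ :=
        (hd1 a).comp_hasFDerivAt θ₀ hl
      have h2 : HasFDerivAt (fun t : ℝ × ℝ => Real.log (H (t.1 + t.2 * x)))
          ((H a)⁻¹ • (H' a) • ((ContinuousLinearMap.fst ℝ ℝ ℝ) + x • (ContinuousLinearMap.snd ℝ ℝ ℝ))) θ₀ :=
        by have := (Real.hasDerivAt_log (ne_of_gt hpos)).comp_hasFDerivAt θ₀ h1; exact this
      rw [h2.fderiv]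
      simp [ContinuousLinearMap.smul_apply, div_eq_inv_mul]
      ring
  | false =>
      simp only [binModel, if_false, Bool.false_eq_true] at hpos ⊢
      have hH1 : HasDerivAt (fun z => 1 - H z) (-H' a) a := (hd1 a).const_sub 1
      have h1 : HasFDerivAt (fun t : ℝ × ℝ => 1 - H (t.1 + t.2 * x))
          ((-H' a) • ((ContinuousLinearMap.fst ℝ ℝ ℝ) + x • (ContinuousLinearMap.snd ℝ ℝ ℝ))) θ₀ :=
        by have := hH1.comp_hasFDerivAt θ₀ hl; exact this
      have h2 : HasFDerivAt (fun t : ℝ × ℝ => Real.log (1 - H (t.1 + t.2 * x)))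
          ((1 - H a)⁻¹ • (-H' a) • ((ContinuousLinearMap.fst ℝ ℝ ℝ) + x • (ContinuousLinearMap.snd ℝ ℝ ℝ))) θ₀ :=
        by have := (Real.hasDerivAt_log (ne_of_gt hpos)).comp_hasFDerivAt θ₀ h1; exact this
      rw [h2.fderiv]
      simp [ContinuousLinearMap.smul_apply, div_eq_inv_mul]
      ring



lemma keylemma (p S c s : ℝ) (hS : S ≠ 0) (h2 : S^2 = p) :
    (1/2 : ℝ) * (c / p * s) * S = c/(2*S) * s := by
  subst h2; field_simp

lemma DbinQM_le (H H' H'' : ℝ → ℝ)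
    (hpos : ∀ a, 0 < H a) (hlt : ∀ a, H a < 1)
    (hd1 : ∀ a, HasDerivAt H (H' a) a) (hd2 : ∀ a, HasDerivAt H' (H'' a) a)
    (θ₀ : ℝ × ℝ) (x : ℝ) (v : ℝ × ℝ) (Q : ℝ)
    (hQt : ∀ r ∈ Set.Icc (0:ℝ) 1, (v.1 + v.2*x)^2 *
        |gtwo H H' H'' ((θ₀.1 + θ₀.2*x) + r*(v.1 + v.2*x))| ≤ Q)
    (hQf : ∀ r ∈ Set.Icc (0:ℝ) 1, (v.1 + v.2*x)^2 *
        |gtwo (fun z => 1 - H z) (fun z => -H' z) (fun z => -H'' z)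
          ((θ₀.1 + θ₀.2*x) + r*(v.1 + v.2*x))| ≤ Q) :
    DbinQM H θ₀ v x ≤ 2*Q^2 := by
  set a := θ₀.1 + θ₀.2 * x with ha
  set s := v.1 + v.2 * x with hs
  have hQ0 : 0 ≤ Q := le_trans (by positivity) (hQt 0 ⟨le_refl 0, zero_le_one⟩)
  have e1 : (θ₀ + v).1 + (θ₀ + v).2 * x = a + s := by
    simp only [Prod.fst_add, Prod.snd_add, ha, hs]; ring
  have hq' : ∀ z, 0 < 1 - H z := fun z => by linarith [hlt z]
  have hd1' : ∀ z, HasDerivAt (fun z => 1 - H z) (-H' z) z := fun z => (hd1 z).const_sub 1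
  have hd2' : ∀ z, HasDerivAt (fun z => -H' z) (-H'' z) z := fun z => (hd2 z).neg
  -- true branch
  have hbt : 0 < binModel H θ₀ x true := by simp [binModel]; exact hpos a
  have hbf : 0 < binModel H θ₀ x false := by simp only [binModel, if_false, Bool.false_eq_true]; exact hq' a
  have St : Real.sqrt (H a) ≠ 0 := ne_of_gt (Real.sqrt_pos.2 (hpos a))
  have Sf : Real.sqrt (1 - H a) ≠ 0 := ne_of_gt (Real.sqrt_pos.2 (hq' a))
  have ht2 : Real.sqrt (H a) ^ 2 = H a := Real.sq_sqrt (hpos a).le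
  have hf2 : Real.sqrt (1 - H a) ^ 2 = 1 - H a := Real.sq_sqrt (hq' a).le
  have termt : (Real.sqrt (binModel H (θ₀ + v) x true) - Real.sqrt (binModel H θ₀ x true) -
      (1 / 2) * (fderiv ℝ (fun t => Real.log (binModel H t x true)) θ₀ v) *
        Real.sqrt (binModel H θ₀ x true)) ^ 2 ≤ Q^2 := by
    rw [fderiv_log_binModel H H' hd1 θ₀ x true hbt v]
    simp only [binModel, if_true, e1]
    have key : (1/2 : ℝ) * (H' a / H a * s) * Real.sqrt (H a) = gone H H' a * s := by
      unfold gone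
      exact keylemma (H a) (Real.sqrt (H a)) (H' a) s St ht2
    rw [key]
    have := sqrt_taylor H H' H'' hpos hd1 hd2 a s Q hQt
    calc (Real.sqrt (H (a + s)) - Real.sqrt (H a) - gone H H' a * s) ^ 2
        = |Real.sqrt (H (a + s)) - Real.sqrt (H a) - gone H H' a * s| ^ 2 := (sq_abs _).symm
      _ ≤ Q ^ 2 := by apply pow_le_pow_left₀ (abs_nonneg _) this
  have termf : (Real.sqrt (binModel H (θ₀ + v) x false) - Real.sqrt (binModel H θ₀ x false) -
      (1 / 2) * (fderiv ℝ (fun t => Real.log (binModel H t x false)) θ₀ v) *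
        Real.sqrt (binModel H θ₀ x false)) ^ 2 ≤ Q^2 := by
    rw [fderiv_log_binModel H H' hd1 θ₀ x false hbf v]
    simp only [binModel, if_false, Bool.false_eq_true, e1]
    have key : (1/2 : ℝ) * (-H' a / (1 - H a) * s) * Real.sqrt (1 - H a)
        = gone (fun z => 1 - H z) (fun z => -H' z) a * s := by
      unfold gone
      exact keylemma (1 - H a) (Real.sqrt (1 - H a)) (-H' a) s Sf hf2
    rw [key]
    have := sqrt_taylor (fun z => 1 - H z) (fun z => -H' z) (fun z => -H'' z) hq' hd1' hd2' a s Q hQf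
    calc (Real.sqrt (1 - H (a + s)) - Real.sqrt (1 - H a)
          - gone (fun z => 1 - H z) (fun z => -H' z) a * s) ^ 2
        = |Real.sqrt (1 - H (a + s)) - Real.sqrt (1 - H a)
          - gone (fun z => 1 - H z) (fun z => -H' z) a * s| ^ 2 := (sq_abs _).symm
      _ ≤ Q ^ 2 := by apply pow_le_pow_left₀ (abs_nonneg _) this
  unfold DbinQM
  rw [Fintype.sum_bool]
  linarith [termt, termf]


lemma gtwo_bound (q q' q'' : ℝ → ℝ) (hq : ∀ a, 0 < q a) (C : ℝ)
    (h1 : ∀ a, (1+a^2) * |q'' a| ≤ C * Real.sqrt (q a))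
    (h2 : ∀ a, (1+a^2) * (q' a)^2 ≤ C * (q a * Real.sqrt (q a))) :
    ∀ a, (1+a^2) * |gtwo q q' q'' a| ≤ C := by
  intro a
  have hS : 0 < Real.sqrt (q a) := Real.sqrt_pos.2 (hq a)
  set S := Real.sqrt (q a) with hSd
  have hC0 : 0 ≤ C := by
    have ha := h1 0
    have hb : (0:ℝ) ≤ (1+(0:ℝ)^2) * |q'' 0| := by positivity
    nlinarith [Real.sqrt_pos.2 (hq 0)]
  have h2S : (0:ℝ) < 2*S := by linarith
  have h4S : (0:ℝ) < 4*q a*S := by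
    have := hq a
    have : (0:ℝ) < 4*q a := by linarith
    exact mul_pos this hS
  have htri : |gtwo q q' q'' a| ≤ |q'' a|/(2*S) + (q' a)^2/(4*q a*S) := by
    unfold gtwo
    refine (abs_sub _ _).trans ?_
    rw [abs_div, abs_div, abs_of_pos h2S, abs_of_pos h4S, abs_of_nonneg (sq_nonneg (q' a))]
  have hb1 : (1+a^2) * (|q'' a|/(2*S)) ≤ C/2 := by
    rw [mul_div_assoc', div_le_iff₀ h2S]
    calc (1+a^2) * |q'' a| ≤ C * S := h1 a
      _ = C/2 * (2*S) := by ring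
  have hb2 : (1+a^2) * ((q' a)^2/(4*q a*S)) ≤ C/4 := by
    rw [mul_div_assoc', div_le_iff₀ h4S]
    calc (1+a^2) * (q' a)^2 ≤ C * (q a * S) := h2 a
      _ = C/4 * (4*q a*S) := by ring
  have ha2 : (0:ℝ) < 1 + a^2 := by positivity
  nlinarith [htri, mul_le_mul_of_nonneg_left htri (le_of_lt ha2)]


lemma quad_bound (α β h1 h2 x e1 e2 : ℝ) (hβ : 0 < β)
    (he1 : |e1| ≤ 1) (he2 : |e2| ≤ β/2) :
    (h1 + h2*x)^2 ≤ (2*(|h1| + (2*|h2|/β)*(|α|+1))^2 + 2*(2*|h2|/β)^2)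
      * (1 + ((α + e1) + (β + e2)*x)^2) := by
  set b := (α + e1) + (β + e2)*x with hbdef
  set A := |h1| + (2*|h2|/β)*(|α|+1) with hAdef
  set B := 2*|h2|/β with hBdef
  have hB0 : 0 ≤ B := by positivity
  have hA0 : 0 ≤ A := by positivity
  have hBβ : B * (β/2) = |h2| := by rw [hBdef]; field_simp
  have hβe : β/2 ≤ β + e2 := by
    have := abs_le.1 he2
    linarith [this.1]
  have hstep : (β/2) * |x| ≤ |b| + |α| + 1 := by
    have h1' : (β + e2) * |x| = |(β + e2) * x| := by
      rw [abs_mul, abs_of_nonneg (by linarith : (0:ℝ) ≤ β + e2)]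
    have h2' : (β + e2) * x = b - (α + e1) := by rw [hbdef]; ring
    have h3' : |(β + e2) * x| ≤ |b| + |α + e1| := by
      rw [h2']; exact (abs_sub _ _)
    have h4' : |α + e1| ≤ |α| + 1 := le_trans (abs_add_le _ _) (by linarith [abs_le.1 he1])
    have h5' : (β/2) * |x| ≤ (β + e2) * |x| :=
      mul_le_mul_of_nonneg_right hβe (abs_nonneg x)
    linarith [h1' ▸ h5', h3', h4']
  have hh2x : |h2| * |x| ≤ B * (|b| + |α| + 1) := by
    calc |h2| * |x| = B * ((β/2) * |x|) := by rw [← hBβ]; ring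
      _ ≤ B * (|b| + |α| + 1) := mul_le_mul_of_nonneg_left hstep hB0
  have habs : |h1 + h2*x| ≤ A + B*|b| := by
    calc |h1 + h2*x| ≤ |h1| + |h2| * |x| := le_trans (abs_add_le _ _) (by rw [abs_mul])
      _ ≤ |h1| + B*(|b| + |α| + 1) := by linarith
      _ = A + B*|b| := by rw [hAdef]; ring
  calc (h1 + h2*x)^2 = |h1 + h2*x|^2 := (sq_abs _).symm
    _ ≤ (A + B*|b|)^2 := pow_le_pow_left₀ (abs_nonneg _) habs 2
    _ ≤ (2*A^2 + 2*B^2) * (1 + b^2) := by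
        nlinarith [sq_nonneg (A - B*|b|), sq_abs b, sq_nonneg A, sq_nonneg B, abs_nonneg b,
          sq_nonneg (A*|b| - B), sq_nonneg (|b|)]



theorem abstract_sdqm (H H' H'' : ℝ → ℝ)
    (hpos : ∀ a, 0 < H a) (hlt : ∀ a, H a < 1)
    (hd1 : ∀ a, HasDerivAt H (H' a) a) (hd2 : ∀ a, HasDerivAt H' (H'' a) a)
    (C : ℝ)
    (hgt : ∀ a, (1+a^2) * |gtwo H H' H'' a| ≤ C)
    (hgf : ∀ a, (1+a^2) * |gtwo (fun z => 1 - H z) (fun z => -H' z) (fun z => -H'' z) a| ≤ C)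
    (θ₀ : ℝ × ℝ) (hβ₀ : 0 < θ₀.2)
    {Ω : Type*} [MeasurableSpace Ω] (P : Measure Ω) [IsProbabilityMeasure P]
    (X : ℕ → Ω → ℝ) (h : ℝ × ℝ) :
    Tendsto (fun n : ℕ => ∑ i ∈ Finset.Icc 1 n,
      ∫ ω, DbinQM H θ₀ ((Real.sqrt n)⁻¹ • h) (X i ω) ∂P) atTop (nhds 0) := by
  have hC0 : 0 ≤ C := le_trans (by positivity) (hgt 0)
  set K := 2*(|h.1| + (2*|h.2|/θ₀.2)*(|θ₀.1|+1))^2 + 2*(2*|h.2|/θ₀.2)^2 with hKdef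
  have hK0 : 0 ≤ K := by positivity
  set R := 2*(C*K)^2 with hRdef
  apply squeeze_zero_norm' (a := fun n : ℕ => R / n)
  swap
  · exact tendsto_const_div_atTop_nhds_zero_nat R
  set M := max (max (|h.1|) (2*|h.2|/θ₀.2)) 1 with hMdef
  have hM1 : (1:ℝ) ≤ M := le_max_right _ 1
  filter_upwards [eventually_ge_atTop (⌈M^2⌉₊)] with n hn
  have hMn : M^2 ≤ (n:ℝ) := le_trans (Nat.le_ceil _) (by exact_mod_cast hn)
  have hn1 : (1:ℝ) ≤ (n:ℝ) := by nlinarith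
  have hnpos : (0:ℝ) < n := by linarith
  have hsM : M ≤ Real.sqrt n := by
    have := Real.sqrt_le_sqrt hMn
    rwa [Real.sqrt_sq (by linarith : (0:ℝ) ≤ M)] at this
  have hspos : (0:ℝ) < Real.sqrt n := by linarith
  have hsq : (Real.sqrt n)^2 = (n:ℝ) := Real.sq_sqrt (by positivity)
  -- pointwise bound
  have core : ∀ x : ℝ, ∀ g : ℝ → ℝ, (∀ a, (1+a^2) * |g a| ≤ C) → ∀ r ∈ Set.Icc (0:ℝ) 1,
      (((Real.sqrt n)⁻¹ • h).1 + ((Real.sqrt n)⁻¹ • h).2 * x)^2 *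
        |g ((θ₀.1 + θ₀.2*x) + r*(((Real.sqrt n)⁻¹ • h).1 + ((Real.sqrt n)⁻¹ • h).2 * x))|
        ≤ C*K/n := by
    intro x g hg r hr
    have hv1 : ((Real.sqrt n)⁻¹ • h).1 = (Real.sqrt n)⁻¹ * h.1 := rfl
    have hv2 : ((Real.sqrt n)⁻¹ • h).2 = (Real.sqrt n)⁻¹ * h.2 := rfl
    rw [hv1, hv2]
    have hs : (Real.sqrt n)⁻¹ * h.1 + (Real.sqrt n)⁻¹ * h.2 * x
        = (Real.sqrt n)⁻¹ * (h.1 + h.2 * x) := by ring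
    rw [hs]
    have hssq : ((Real.sqrt n)⁻¹ * (h.1 + h.2*x))^2 = (h.1 + h.2*x)^2 / n := by
      rw [mul_pow, inv_pow, hsq]; ring
    rw [hssq]
    set s := (Real.sqrt n)⁻¹ * (h.1 + h.2*x) with hsdef
    set b := (θ₀.1 + θ₀.2*x) + r*s with hbdef
    have he1 : |r * h.1 / Real.sqrt n| ≤ 1 := by
      rw [abs_div, abs_mul, abs_of_nonneg hspos.le]
      rw [div_le_one hspos]
      calc |r| * |h.1| ≤ 1 * |h.1| := by
            apply mul_le_mul_of_nonneg_right _ (abs_nonneg _)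
            rw [abs_of_nonneg hr.1]; exact hr.2
        _ = |h.1| := one_mul _
        _ ≤ M := le_trans (le_max_left _ _) (le_max_left _ _)
        _ ≤ Real.sqrt n := hsM
    have he2 : |r * h.2 / Real.sqrt n| ≤ θ₀.2/2 := by
      rw [abs_div, abs_mul, abs_of_nonneg hspos.le, div_le_iff₀ hspos]
      have h2M : 2*|h.2|/θ₀.2 ≤ Real.sqrt n :=
        le_trans (le_trans (le_max_right _ _) (le_max_left _ _)) hsM
      have : 2*|h.2| ≤ θ₀.2 * Real.sqrt n := by
        rw [div_le_iff₀ hβ₀] at h2M; linarith [h2M]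
      calc |r| * |h.2| ≤ 1 * |h.2| := by
            apply mul_le_mul_of_nonneg_right _ (abs_nonneg _)
            rw [abs_of_nonneg hr.1]; exact hr.2
        _ = |h.2| := one_mul _
        _ ≤ θ₀.2/2 * Real.sqrt n := by linarith
    have hbform : b = (θ₀.1 + r * h.1 / Real.sqrt n) + (θ₀.2 + r * h.2 / Real.sqrt n) * x := by
      rw [hbdef, hsdef]; field_simp; ring
    have hquad := quad_bound θ₀.1 θ₀.2 h.1 h.2 x (r * h.1 / Real.sqrt n)
      (r * h.2 / Real.sqrt n) hβ₀ he1 he2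
    rw [← hbform] at hquad
    have hb2 : (0:ℝ) < 1 + b^2 := by positivity
    have hgb : |g b| ≤ C / (1 + b^2) := by
      rw [le_div_iff₀ hb2]
      calc |g b| * (1+b^2) = (1+b^2) * |g b| := by ring
        _ ≤ C := hg b
    calc (h.1 + h.2*x)^2/n * |g b|
        ≤ (K * (1+b^2))/n * (C/(1+b^2)) := by
          apply mul_le_mul _ hgb (abs_nonneg _) (by positivity)
          · gcongr
      _ = C*K/n := by field_simp
  have key : ∀ x : ℝ, DbinQM H θ₀ ((Real.sqrt n)⁻¹ • h) x ≤ 2*(C*K/n)^2 := by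
    intro x
    exact DbinQM_le H H' H'' hpos hlt hd1 hd2 θ₀ x _ (C*K/n)
      (core x _ hgt) (core x _ hgf)
  -- integrate and sum
  have hnonneg : ∀ x : ℝ, 0 ≤ DbinQM H θ₀ ((Real.sqrt n)⁻¹ • h) x := by
    intro x
    unfold DbinQM
    exact Finset.sum_nonneg fun y _ => sq_nonneg _
  have hint : ∀ i : ℕ, ‖∫ ω, DbinQM H θ₀ ((Real.sqrt n)⁻¹ • h) (X i ω) ∂P‖ ≤ 2*(C*K/n)^2 := by
    intro i
    have := norm_integral_le_of_norm_le_const (μ := P)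
      (f := fun ω => DbinQM H θ₀ ((Real.sqrt n)⁻¹ • h) (X i ω)) (C := 2*(C*K/n)^2)
      (Eventually.of_forall fun ω => by
        rw [Real.norm_eq_abs, abs_of_nonneg (hnonneg _)]
        exact key _)
    simpa [measure_univ] using this
  calc ‖∑ i ∈ Finset.Icc 1 n, ∫ ω, DbinQM H θ₀ ((Real.sqrt n)⁻¹ • h) (X i ω) ∂P‖
      ≤ ∑ i ∈ Finset.Icc 1 n, ‖∫ ω, DbinQM H θ₀ ((Real.sqrt n)⁻¹ • h) (X i ω) ∂P‖ :=
        norm_sum_le _ _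
    _ ≤ ∑ _i ∈ Finset.Icc 1 n, 2*(C*K/n)^2 := Finset.sum_le_sum fun i _ => hint i
    _ = n * (2*(C*K/n)^2) := by
        rw [Finset.sum_const, Nat.card_Icc]; simp [nsmul_eq_mul]
    _ = R / n := by
        rw [hRdef]
        have hne : (n:ℝ) ≠ 0 := ne_of_gt hnpos
        field_simp


lemma sigmoid_pos (a : ℝ) : 0 < logisticSigmoid a := by
  unfold logisticSigmoid; positivity

lemma sigmoid_lt_one (a : ℝ) : logisticSigmoid a < 1 := by
  unfold logisticSigmoid
  rw [div_lt_one (by positivity)]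
  linarith [Real.exp_pos (-a)]

lemma sigmoid_deriv (a : ℝ) :
    HasDerivAt logisticSigmoid (logisticSigmoid a * (1 - logisticSigmoid a)) a := by
  have h1 : HasDerivAt (fun a : ℝ => 1 + Real.exp (-a)) (-Real.exp (-a)) a := by
    simpa using ((Real.hasDerivAt_exp (-a)).comp a ((hasDerivAt_id a).neg)).const_add 1
  have h2 : (1 : ℝ) + Real.exp (-a) ≠ 0 := by positivity
  have h3 := h1.inv h2
  have : (fun a : ℝ => (1 + Real.exp (-a))⁻¹) = logisticSigmoid := by
    funext z; unfold logisticSigmoid; rw [one_div]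
  have h3 : HasDerivAt logisticSigmoid (-(-Real.exp (-a)) / (1 + Real.exp (-a)) ^ 2) a := by
    rw [← this]; exact h3
  refine h3.congr_deriv ?_
  unfold logisticSigmoid
  field_simp
  ring
  
lemma sigmoid_deriv2 (a : ℝ) :
    HasDerivAt (fun z => logisticSigmoid z * (1 - logisticSigmoid z))
      (logisticSigmoid a * (1 - logisticSigmoid a) * (1 - 2*logisticSigmoid a)) a := by
  have h1 := (sigmoid_deriv a).mul ((sigmoid_deriv a).const_sub 1)
  refine h1.congr_deriv ?_
  ring

lemma sigmoid_symm (a : ℝ) : logisticSigmoid (-a) = 1 - logisticSigmoid a := by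
  unfold logisticSigmoid
  rw [neg_neg]
  have h1 : (0:ℝ) < 1 + Real.exp (-a) := by positivity
  have h2 : (0:ℝ) < 1 + Real.exp a := by positivity
  have he : Real.exp a * Real.exp (-a) = 1 := by
    rw [← Real.exp_add]; simp
  field_simp
  nlinarith [he]

lemma sqrt_exp_half (a : ℝ) : Real.sqrt (Real.exp a) = Real.exp (a/2) := by
  rw [show Real.exp a = (Real.exp (a/2))^2 by rw [sq, ← Real.exp_add]; ring_nf]
  exact Real.sqrt_sq (Real.exp_pos _).le

lemma logistic_core (a : ℝ) :
    (1+a^2) * (Real.sqrt (logisticSigmoid a) * (1 - logisticSigmoid a)) ≤ 16 := by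
  set σ := logisticSigmoid a with hσ
  have hp := sigmoid_pos a
  have hl := sigmoid_lt_one a
  have hs1 : Real.sqrt σ ≤ 1 := by
    rw [show (1:ℝ) = Real.sqrt 1 by simp]
    exact Real.sqrt_le_sqrt hl.le
  have hs0 : 0 ≤ Real.sqrt σ := Real.sqrt_nonneg _
  rcases le_or_gt 0 a with hA | hA
  · -- a ≥ 0 : 1 - σ ≤ exp (-a)
    have h1σ : 1 - σ ≤ Real.exp (-a) := by
      have hE := Real.exp_pos (-a)
      have key : 1 - σ = Real.exp (-a)/(1+Real.exp (-a)) := by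
        rw [hσ]; unfold logisticSigmoid; field_simp; ring
      rw [key]
      exact div_le_self hE.le (by linarith)
    have h16 : (1+a^2) ≤ 16 * Real.exp a := by
      calc 1+a^2 ≤ 16 * Real.exp (a/2) := hexp4 a hA
        _ ≤ 16 * Real.exp a := by
            have := Real.exp_le_exp.2 (by linarith : a/2 ≤ a)
            linarith
    calc (1+a^2) * (Real.sqrt σ * (1 - σ))
        ≤ (1+a^2) * (1 * (1 - σ)) := by
          apply mul_le_mul_of_nonneg_left _ (by positivity)
          apply mul_le_mul_of_nonneg_right hs1 (by linarith)
      _ = (1+a^2) * (1-σ) := by ring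
      _ ≤ (16 * Real.exp a) * Real.exp (-a) := by
          apply mul_le_mul h16 h1σ (by linarith) (by positivity)
      _ = 16 := by rw [mul_assoc, ← Real.exp_add]; simp
  · -- a ≤ 0 : σ ≤ exp a
    have hσe : σ ≤ Real.exp a := by
      rw [hσ]; unfold logisticSigmoid
      rw [div_le_iff₀ (by positivity)]
      have he : Real.exp a * Real.exp (-a) = 1 := by rw [← Real.exp_add]; simp
      nlinarith [Real.exp_pos a]
    have hsσ : Real.sqrt σ ≤ Real.exp (a/2) := by
      calc Real.sqrt σ ≤ Real.sqrt (Real.exp a) := Real.sqrt_le_sqrt hσe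
        _ = Real.exp (a/2) := sqrt_exp_half a
    have h16 : (1+a^2) ≤ 16 * Real.exp ((-a)/2) := by
      have h := hexp4 (-a) (by linarith)
      nlinarith [h]
    calc (1+a^2) * (Real.sqrt σ * (1 - σ))
        ≤ (1+a^2) * (Real.sqrt σ * 1) := by
          apply mul_le_mul_of_nonneg_left _ (by positivity)
          apply mul_le_mul_of_nonneg_left (by linarith) hs0
      _ = (1+a^2) * Real.sqrt σ := by ring
      _ ≤ (16 * Real.exp ((-a)/2)) * Real.exp (a/2) := by
          apply mul_le_mul h16 hsσ hs0 (by positivity)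
      _ = 16 := by rw [mul_assoc, ← Real.exp_add]; ring_nf; simp


noncomputable def sigd (a : ℝ) : ℝ := logisticSigmoid a * (1 - logisticSigmoid a)
noncomputable def sigd2 (a : ℝ) : ℝ := sigd a * (1 - 2*logisticSigmoid a)

lemma logistic_core' (a : ℝ) :
    (1+a^2) * (logisticSigmoid a * Real.sqrt (1 - logisticSigmoid a)) ≤ 16 := by
  have h := logistic_core (-a)
  rw [sigmoid_symm a] at h
  nlinarith [h, Real.sqrt_nonneg (1 - logisticSigmoid a)]

lemma sigd2_abs (a : ℝ) : |sigd2 a| ≤ logisticSigmoid a * (1 - logisticSigmoid a) := by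
  have hp := sigmoid_pos a
  have hl := sigmoid_lt_one a
  unfold sigd2 sigd
  rw [abs_mul, abs_of_nonneg (by nlinarith : (0:ℝ) ≤ logisticSigmoid a * (1 - logisticSigmoid a))]
  have h1 : |1 - 2*logisticSigmoid a| ≤ 1 := abs_le.2 ⟨by linarith, by linarith⟩
  exact mul_le_of_le_one_right (by nlinarith) h1

lemma logistic_hgt (a : ℝ) : (1+a^2) * |gtwo logisticSigmoid sigd sigd2 a| ≤ 16 := by
  refine gtwo_bound _ _ _ sigmoid_pos 16 ?_ ?_ a
  · intro a
    have habs := sigd2_abs a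
    have hcore := logistic_core a
    have hp := sigmoid_pos a
    set p := logisticSigmoid a with hpd
    set S := Real.sqrt p with hSd
    have hss : S * S = p := Real.mul_self_sqrt hp.le
    have hS0 : 0 ≤ S := Real.sqrt_nonneg _
    calc (1+a^2) * |sigd2 a| ≤ (1+a^2) * (p * (1 - p)) :=
          mul_le_mul_of_nonneg_left habs (by positivity)
      _ = S * ((1+a^2) * (S * (1 - p))) := by rw [← hss]; ring
      _ ≤ S * 16 := mul_le_mul_of_nonneg_left hcore hS0
      _ = 16 * S := by ring
  · intro a
    have hcore := logistic_core a
    have hp := sigmoid_pos a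
    have hl := sigmoid_lt_one a
    set p := logisticSigmoid a with hpd
    set S := Real.sqrt p with hSd
    have hss : S * S = p := Real.mul_self_sqrt hp.le
    have hS0 : 0 ≤ S := Real.sqrt_nonneg _
    calc (1+a^2) * (sigd a)^2
        = (p * S) * (((1+a^2) * (S * (1 - p))) * (1 - p)) := by
          unfold sigd
          rw [← hpd, ← hss]; ring
      _ ≤ (p * S) * (16 * 1) := by
          apply mul_le_mul_of_nonneg_left _ (by positivity)
          apply mul_le_mul hcore (by linarith) (by linarith) (by norm_num)
      _ = 16 * (p * S) := by ring

lemma logistic_hgf (a : ℝ) :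
    (1+a^2) * |gtwo (fun z => 1 - logisticSigmoid z) (fun z => -sigd z) (fun z => -sigd2 z) a|
      ≤ 16 := by
  refine gtwo_bound _ _ _ (fun z => by linarith [sigmoid_lt_one z]) 16 ?_ ?_ a
  · intro a
    have habs := sigd2_abs a
    have hcore := logistic_core' a
    have hp := sigmoid_pos a
    have hl := sigmoid_lt_one a
    rw [abs_neg]
    set p := logisticSigmoid a with hpd
    set S := Real.sqrt (1 - p) with hSd
    have hss : S * S = 1 - p := Real.mul_self_sqrt (by linarith)
    have hS0 : 0 ≤ S := Real.sqrt_nonneg _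
    calc (1+a^2) * |sigd2 a| ≤ (1+a^2) * (p * (1 - p)) :=
          mul_le_mul_of_nonneg_left habs (by positivity)
      _ = S * ((1+a^2) * (p * S)) := by rw [← hss]; ring
      _ ≤ S * 16 := mul_le_mul_of_nonneg_left hcore hS0
      _ = 16 * S := by ring
  · intro a
    have hcore := logistic_core' a
    have hp := sigmoid_pos a
    have hl := sigmoid_lt_one a
    set p := logisticSigmoid a with hpd
    set S := Real.sqrt (1 - p) with hSd
    have hss : S * S = 1 - p := Real.mul_self_sqrt (by linarith)
    have hS0 : 0 ≤ S := Real.sqrt_nonneg _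
    calc (1+a^2) * (-sigd a)^2
        = ((1 - p) * S) * (((1+a^2) * (p * S)) * p) := by
          unfold sigd
          rw [← hpd, ← hss]; ring
      _ ≤ ((1 - p) * S) * (16 * 1) := by
          apply mul_le_mul_of_nonneg_left _ (mul_nonneg (by linarith) hS0)
          apply mul_le_mul hcore (by linarith) (by linarith) (by norm_num)
      _ = 16 * ((1 - p) * S) := by ring



noncomputable def nphi (t : ℝ) : ℝ := (Real.sqrt (2 * Real.pi))⁻¹ * Real.exp (-(t ^ 2) / 2)

lemma stdNormalCDF_eq (a : ℝ) : stdNormalCDF a = ∫ t in Set.Iic a, nphi t := rfl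

lemma nphi_pos (t : ℝ) : 0 < nphi t := by
  unfold nphi
  have h : (0:ℝ) < Real.sqrt (2 * Real.pi) := Real.sqrt_pos.2 (by positivity)
  positivity

lemma nphi_even (t : ℝ) : nphi (-t) = nphi t := by unfold nphi; ring_nf

lemma nphi_cont : Continuous nphi := by unfold nphi; fun_prop

lemma nphi_integrable : Integrable nphi := by
  have h := (integrable_exp_neg_mul_sq (by norm_num : (0:ℝ) < 1/2)).const_mul
    ((Real.sqrt (2 * Real.pi))⁻¹)
  have heq : nphi = fun t => (Real.sqrt (2 * Real.pi))⁻¹ * Real.exp (-(1/2) * t^2) := by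
    funext t; unfold nphi; ring_nf
  rw [heq]; exact h

lemma nphi_integral : ∫ t, nphi t = 1 := by
  have h := integral_gaussian (1/2 : ℝ)
  have heq : (∫ t, nphi t) = ∫ t : ℝ, (Real.sqrt (2 * Real.pi))⁻¹ * Real.exp (-(1/2) * t^2) :=
    integral_congr_ae (Eventually.of_forall fun t => by unfold nphi; ring_nf)
  rw [heq, integral_const_mul,
    show (∫ x : ℝ, Real.exp (-(1/2) * x^2)) = Real.sqrt (Real.pi / (1/2)) from h,
    show Real.pi / (1/2) = 2 * Real.pi by ring]
  have h3 : Real.sqrt (2 * Real.pi) ≠ 0 := ne_of_gt (Real.sqrt_pos.2 (by positivity))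
  field_simp

lemma Phi_mono {a b : ℝ} (hab : a ≤ b) : stdNormalCDF a ≤ stdNormalCDF b := by
  rw [stdNormalCDF_eq, stdNormalCDF_eq]
  apply setIntegral_mono_set nphi_integrable.integrableOn
    (Eventually.of_forall fun t => (nphi_pos t).le)
    (HasSubset.Subset.eventuallyLE (Set.Iic_subset_Iic.2 hab))

lemma Phi_lb (a : ℝ) (ha : a ≤ 0) : nphi (a-1) ≤ stdNormalCDF a := by
  have hle : a - 1 ≤ a := by linarith
  have h1 : ∫ t in (a-1)..a, nphi t ≤ stdNormalCDF a := by
    rw [intervalIntegral.integral_of_le hle, stdNormalCDF_eq]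
    apply setIntegral_mono_set nphi_integrable.integrableOn
      (Eventually.of_forall fun t => (nphi_pos t).le)
      (HasSubset.Subset.eventuallyLE (fun t ht => le_trans ht.2 (le_refl a) : Set.Ioc (a-1) a ⊆ Set.Iic a))
  have h2 : nphi (a-1) ≤ ∫ t in (a-1)..a, nphi t := by
    have hconst : ∫ _ in (a-1)..a, nphi (a-1) = nphi (a-1) := by
      rw [intervalIntegral.integral_const]; simp
    rw [← hconst]
    apply intervalIntegral.integral_mono_on hle intervalIntegrable_const
      nphi_integrable.intervalIntegrable
    intro t ht
    unfold nphi
    apply mul_le_mul_of_nonneg_left _ (by positivity)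
    apply Real.exp_le_exp.2
    nlinarith [ht.1, ht.2]
  linarith

lemma nphi_anti {s t : ℝ} (hs : 0 ≤ s) (hst : s ≤ t) : nphi t ≤ nphi s := by
  unfold nphi
  apply mul_le_mul_of_nonneg_left _ (by positivity)
  apply Real.exp_le_exp.2
  nlinarith

lemma Phi_mills (a : ℝ) : nphi (|a|+1) ≤ stdNormalCDF a := by
  rcases le_or_gt a 0 with ha | ha
  · have h1 : nphi (|a|+1) = nphi (a-1) := by
      rw [abs_of_nonpos ha, show -a+1 = -(a-1) by ring, nphi_even]
    rw [h1]; exact Phi_lb a ha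
  · have h1 : nphi (|a|+1) = nphi (a+1) := by rw [abs_of_pos ha]
    rw [h1]
    calc nphi (a+1) ≤ nphi 1 := nphi_anti (by norm_num) (by linarith)
      _ = nphi (0-1) := by rw [show (0:ℝ)-1 = -1 by ring, nphi_even]
      _ ≤ stdNormalCDF 0 := Phi_lb 0 (le_refl 0)
      _ ≤ stdNormalCDF a := Phi_mono ha.le

lemma Phi_pos (a : ℝ) : 0 < stdNormalCDF a := lt_of_lt_of_le (nphi_pos _) (Phi_mills a)

lemma Phi_neg (a : ℝ) : stdNormalCDF (-a) = 1 - stdNormalCDF a := by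
  have h1 : stdNormalCDF (-a) = ∫ x in Set.Ioi a, nphi x := by
    rw [stdNormalCDF_eq, ← integral_comp_neg_Ioi]
    congr 1; funext x; rw [nphi_even]
  have h2 : stdNormalCDF a + ∫ x in Set.Ioi a, nphi x = 1 := by
    rw [stdNormalCDF_eq, show Set.Ioi a = (Set.Iic a)ᶜ from (Set.compl_Iic).symm]
    rw [integral_add_compl measurableSet_Iic nphi_integrable, nphi_integral]
  linarith
  
lemma Phi_lt_one (a : ℝ) : stdNormalCDF a < 1 := by
  have := Phi_pos (-a)
  rw [Phi_neg] at this
  linarith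

lemma nphi_deriv (a : ℝ) : HasDerivAt nphi (-a * nphi a) a := by
  have h0 : HasDerivAt (fun t : ℝ => t^2) (2*a) a := by simpa using hasDerivAt_pow 2 a
  have h1 : HasDerivAt (fun t : ℝ => -(t^2)/2) (-a) a := by
    have := (h0.neg).div_const 2
    refine this.congr_deriv ?_; ring
  have h2 := h1.exp
  have h3 := h2.const_mul ((Real.sqrt (2 * Real.pi))⁻¹)
  have heq : (fun t : ℝ => (Real.sqrt (2 * Real.pi))⁻¹ * Real.exp (-(t^2)/2)) = nphi := rfl
  rw [heq] at h3
  refine h3.congr_deriv ?_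
  unfold nphi; ring

lemma Phi_deriv (a : ℝ) : HasDerivAt stdNormalCDF (nphi a) a := by
  have hrepr : stdNormalCDF = fun b => stdNormalCDF 0 + ∫ t in (0:ℝ)..b, nphi t := by
    funext b
    have h := intervalIntegral.integral_Iic_sub_Iic (nphi_integrable.integrableOn)
      (nphi_integrable.integrableOn) (a := (0:ℝ)) (b := b)
    rw [stdNormalCDF_eq, stdNormalCDF_eq] at *
    linarith [h]
  have hD : HasDerivAt (fun u => ∫ t in (0:ℝ)..u, nphi t) (nphi a) a :=
    intervalIntegral.integral_hasDerivAt_right nphi_integrable.intervalIntegrable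
      (nphi_cont.stronglyMeasurableAtFilter _ _) nphi_cont.continuousAt
  rw [hrepr]
  exact hD.const_add _

lemma exp_half_le_two : Real.exp (1/2 : ℝ) ≤ 2 := by
  have h : Real.exp (1/2 : ℝ) * Real.exp (1/2 : ℝ) = Real.exp 1 := by
    rw [← Real.exp_add]; norm_num
  nlinarith [Real.exp_pos (1/2 : ℝ), Real.exp_one_lt_d9]

lemma exp_three_le : Real.exp (3:ℝ) ≤ 21 := by
  have h : Real.exp (3:ℝ) = Real.exp 1 * Real.exp 1 * Real.exp 1 := by
    rw [← Real.exp_add, ← Real.exp_add]; norm_num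
  nlinarith [Real.exp_pos (1:ℝ), Real.exp_one_lt_d9]

lemma sqrtc_facts : 0 < (Real.sqrt (2 * Real.pi))⁻¹ ∧ (Real.sqrt (2 * Real.pi))⁻¹ ≤ 1 := by
  have h1 : (1:ℝ) ≤ Real.sqrt (2 * Real.pi) := by
    rw [show (1:ℝ) = Real.sqrt 1 by simp]
    exact Real.sqrt_le_sqrt (by nlinarith [Real.pi_gt_three])
  constructor
  · positivity
  · exact inv_le_one_of_one_le₀ h1

lemma sqrt_nphi (t : ℝ) : Real.sqrt (nphi t)
    = Real.sqrt ((Real.sqrt (2 * Real.pi))⁻¹) * Real.exp (-(t^2)/4) := by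
  unfold nphi
  rw [Real.sqrt_mul (le_of_lt sqrtc_facts.1), sqrt_exp_half,
    show -(t^2)/2/2 = -(t^2)/4 by ring]

lemma probit_decay1 (a : ℝ) {p : ℝ} (hp : nphi (|a|+1) ≤ p) :
    (1+a^2) * |-a * nphi a| ≤ 30000 * Real.sqrt p := by
  set c := (Real.sqrt (2 * Real.pi))⁻¹ with hcd
  obtain ⟨hc0, hc1⟩ := sqrtc_facts
  have hsc : Real.sqrt c * Real.sqrt c = c := Real.mul_self_sqrt hc0.le
  have hsc1 : Real.sqrt c ≤ 1 := by
    rw [show (1:ℝ) = Real.sqrt 1 by simp]; exact Real.sqrt_le_sqrt hc1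
  have hcsc : c ≤ Real.sqrt c := by nlinarith [Real.sqrt_nonneg c]
  set b := |a| with hbd
  have hb : 0 ≤ b := abs_nonneg a
  have hnb : nphi a = nphi b := by
    rcases abs_cases a with ⟨h1, _⟩ | ⟨h1, _⟩
    · rw [hbd, h1]
    · rw [hbd, h1, nphi_even]
  have habs : |-a * nphi a| = b * nphi b := by
    rw [abs_mul, abs_neg, ← hnb, abs_of_pos (nphi_pos a), hnb]
  have ha2 : 1 + a^2 = 1 + b^2 := by rw [hbd, sq_abs]
  rw [habs, ha2]
  have hkey : (1+b^2) * (b * nphi b) ≤ 30000 * Real.sqrt (nphi (b+1)) := by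
    have hnbe : nphi b = c * Real.exp (-(b^2)/2) := rfl
    rw [sqrt_nphi, hnbe, ← hcd]
    have h2 := hexp2 b hb
    have e1 : Real.exp ((b-1)^2/4) * Real.exp (-(b^2)/2)
        = Real.exp (1/2 : ℝ) * Real.exp (-((b+1)^2)/4) := by
      rw [← Real.exp_add, ← Real.exp_add]; congr 1; ring
    calc (1+b^2) * (b * (c * Real.exp (-(b^2)/2)))
        ≤ ((1+b^2) * (1+b)) * (c * Real.exp (-(b^2)/2)) := by
          have hcc : 0 ≤ c * Real.exp (-(b^2)/2) := by positivity
          nlinarith [sq_nonneg b, Real.exp_pos (-(b^2)/2), mul_nonneg hb hb]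
      _ ≤ (576 * Real.exp ((b-1)^2/4)) * (c * Real.exp (-(b^2)/2)) := by
          apply mul_le_mul_of_nonneg_right h2 (by positivity)
      _ = 576 * c * (Real.exp ((b-1)^2/4) * Real.exp (-(b^2)/2)) := by ring
      _ = 576 * c * (Real.exp (1/2 : ℝ) * Real.exp (-((b+1)^2)/4)) := by rw [e1]
      _ ≤ 576 * c * (2 * Real.exp (-((b+1)^2)/4)) := by
          apply mul_le_mul_of_nonneg_left _ (by positivity)
          exact mul_le_mul_of_nonneg_right exp_half_le_two (Real.exp_pos _).le
      _ = 1152 * c * Real.exp (-((b+1)^2)/4) := by ring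
      _ ≤ 30000 * Real.sqrt c * Real.exp (-((b+1)^2)/4) := by
          apply mul_le_mul_of_nonneg_right _ (Real.exp_pos _).le
          nlinarith [Real.sqrt_nonneg c]
      _ = 30000 * (Real.sqrt c * Real.exp (-((b+1)^2)/4)) := by ring
  calc (1+b^2) * (b * nphi b) ≤ 30000 * Real.sqrt (nphi (b+1)) := hkey
    _ ≤ 30000 * Real.sqrt p := by
        apply mul_le_mul_of_nonneg_left _ (by norm_num)
        apply Real.sqrt_le_sqrt
        rw [hbd]; exact hp

lemma probit_decay2 (a : ℝ) {p : ℝ} (hp : nphi (|a|+1) ≤ p) :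
    (1+a^2) * (nphi a)^2 ≤ 30000 * (p * Real.sqrt p) := by
  set c := (Real.sqrt (2 * Real.pi))⁻¹ with hcd
  obtain ⟨hc0, hc1⟩ := sqrtc_facts
  have hsc : Real.sqrt c * Real.sqrt c = c := Real.mul_self_sqrt hc0.le
  have hcsc : c ≤ Real.sqrt c := by nlinarith [Real.sqrt_nonneg c]
  set b := |a| with hbd
  have hb : 0 ≤ b := abs_nonneg a
  have hnb : nphi a = nphi b := by
    rcases abs_cases a with ⟨h1, _⟩ | ⟨h1, _⟩
    · rw [hbd, h1]
    · rw [hbd, h1, nphi_even]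
  have ha2 : 1 + a^2 = 1 + b^2 := by rw [hbd, sq_abs]
  rw [hnb, ha2]
  have hmono : nphi (b+1) * Real.sqrt (nphi (b+1)) ≤ p * Real.sqrt p := by
    have h0 := (nphi_pos (b+1)).le
    have hp' : nphi (b+1) ≤ p := by rw [hbd] at hp ⊢; exact hp
    exact mul_le_mul hp' (Real.sqrt_le_sqrt hp') (Real.sqrt_nonneg _) (le_trans h0 hp')
  have hkey : (1+b^2) * (nphi b)^2 ≤ 30000 * (nphi (b+1) * Real.sqrt (nphi (b+1))) := by
    have hnbe : nphi b = c * Real.exp (-(b^2)/2) := rfl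
    have hnb1 : nphi (b+1) = c * Real.exp (-((b+1)^2)/2) := rfl
    rw [sqrt_nphi, hnbe, hnb1, ← hcd]
    have h3 := hexp3 b hb
    have esq : (c * Real.exp (-(b^2)/2))^2 = c^2 * Real.exp (-(b^2)) := by
      rw [mul_pow, sq (Real.exp _), ← Real.exp_add]; congr 2; ring
    have e1 : Real.exp ((b-3)^2/4) * Real.exp (-(b^2))
        = Real.exp (3:ℝ) * Real.exp (-(3*(b+1)^2)/4) := by
      rw [← Real.exp_add, ← Real.exp_add]; congr 1; ring
    have e2 : (c * Real.exp (-((b+1)^2)/2)) * (Real.sqrt c * Real.exp (-((b+1)^2)/4))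
        = c * Real.sqrt c * Real.exp (-(3*(b+1)^2)/4) := by
      rw [mul_mul_mul_comm, ← Real.exp_add]; congr 2; ring
    rw [esq, e2]
    calc (1+b^2) * (c^2 * Real.exp (-(b^2)))
        ≤ (1216 * Real.exp ((b-3)^2/4)) * (c^2 * Real.exp (-(b^2))) := by
          apply mul_le_mul_of_nonneg_right h3 (by positivity)
      _ = 1216 * c^2 * (Real.exp ((b-3)^2/4) * Real.exp (-(b^2))) := by ring
      _ = 1216 * c^2 * (Real.exp (3:ℝ) * Real.exp (-(3*(b+1)^2)/4)) := by rw [e1]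
      _ ≤ 1216 * c^2 * (21 * Real.exp (-(3*(b+1)^2)/4)) := by
          apply mul_le_mul_of_nonneg_left _ (by positivity)
          exact mul_le_mul_of_nonneg_right exp_three_le (Real.exp_pos _).le
      _ = 25536 * c^2 * Real.exp (-(3*(b+1)^2)/4) := by ring
      _ ≤ 30000 * (c * Real.sqrt c) * Real.exp (-(3*(b+1)^2)/4) := by
          apply mul_le_mul_of_nonneg_right _ (Real.exp_pos _).le
          nlinarith [Real.sqrt_nonneg c, hc0]
      _ = 30000 * (c * Real.sqrt c * Real.exp (-(3*(b+1)^2)/4)) := by ring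
  exact le_trans hkey (mul_le_mul_of_nonneg_left hmono (by norm_num))

lemma probit_hgt (a : ℝ) :
    (1+a^2) * |gtwo stdNormalCDF nphi (fun z => -z * nphi z) a| ≤ 30000 :=
  gtwo_bound _ _ _ Phi_pos 30000
    (fun a => by simpa using probit_decay1 a (Phi_mills a))
    (fun a => probit_decay2 a (Phi_mills a)) a

lemma probit_hgf (a : ℝ) :
    (1+a^2) * |gtwo (fun z => 1 - stdNormalCDF z) (fun z => -nphi z)
      (fun z => -(-z * nphi z)) a| ≤ 30000 := by
  have hmills : ∀ t : ℝ, nphi (|t|+1) ≤ 1 - stdNormalCDF t := by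
    intro t
    have h := Phi_mills (-t)
    rw [Phi_neg, abs_neg] at h
    exact h
  refine gtwo_bound _ _ _ (fun z => by linarith [Phi_lt_one z]) 30000 ?_ ?_ a
  · intro a
    simpa [abs_neg] using probit_decay1 a (hmills a)
  · intro a
    simpa [neg_sq] using probit_decay2 a (hmills a)

/-- For `H` the logistic or probit cdf, `θ₀ = (α₀, β₀)` with `β₀ > 0`, and any sequence
`(X_i)` of random variables with values in the lattice `x₁ + dℤ` (in particular for the
Bruceton design), the binary regression family is S-DQM at `θ₀`:
`∑_{i=1}^n E[D_{θ₀,h/√n}(X_i)] → 0` for every `h ∈ ℝ²`. -/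
theorem stmt_6 (H : ℝ → ℝ) (hH : H = logisticSigmoid ∨ H = stdNormalCDF)
    (x₁ d : ℝ) (hd : 0 < d) (θ₀ : ℝ × ℝ) (hβ₀ : 0 < θ₀.2)
    {Ω : Type*} [MeasurableSpace Ω] (P : Measure Ω) [IsProbabilityMeasure P]
    (X : ℕ → Ω → ℝ) (hXm : ∀ i, Measurable (X i))
    (hXlattice : ∀ i ω, ∃ k : ℤ, X i ω = x₁ + d * k)
    (h : ℝ × ℝ) :
    Tendsto
      (fun n : ℕ => ∑ i ∈ Finset.Icc 1 n,
        ∫ ω, DbinQM H θ₀ ((Real.sqrt n)⁻¹ • h) (X i ω) ∂P)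
      atTop (nhds 0) := by
  rcases hH with hHe | hHe
  · subst hHe
    exact abstract_sdqm logisticSigmoid sigd sigd2 sigmoid_pos sigmoid_lt_one
      (fun a => sigmoid_deriv a) (fun a => sigmoid_deriv2 a) 16 logistic_hgt logistic_hgf
      θ₀ hβ₀ P X h
  · subst hHe
    exact abstract_sdqm stdNormalCDF nphi (fun z => -z * nphi z) Phi_pos Phi_lt_one
      Phi_deriv (fun a => nphi_deriv a) 30000 probit_hgt probit_hgf θ₀ hβ₀ P X h
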